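/- For every r ∈ ℝ, the integral ∫_ℝ (1 + x²)^{−(1/2 + ir)} · |x|^{−(1/2 − ir)} dx converges absolutely and equals Γ(1/4 + ir/2)² / Γ(1/2 + ir). -/

import Mathlib

open Complex MeasureTheory Set

private lemma cpow_pos_exp {t : ℝ} (ht : 0 < t) (w : ℂ) :
    (t : ℂ) ^ w = Complex.exp (w * Real.log t) := by
  rw [Complex.cpow_def_of_ne_zero (by exact_mod_cast ht.ne'), ← Complex.ofReal_log ht.le,
    mul_comm]

/-- For every `r ∈ ℝ`, `∫_ℝ (1 + x²)^{−(1/2 + ir)} |x|^{−(1/2 − ir)} dx` converges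
absolutely and equals `Γ(1/4 + ir/2)² / Γ(1/2 + ir)`.  (The integrand is interpreted
as `0` at `x = 0`, which is automatic for the complex power of base `0`.) -/
theorem stmt9 (r : ℝ) :
    Integrable (fun x : ℝ =>
      ((1 : ℂ) + (x : ℂ) ^ 2) ^ (-(1 / 2 + Complex.I * r)) *
        ((|x| : ℝ) : ℂ) ^ (-(1 / 2 - Complex.I * r))) ∧
    ∫ x : ℝ, ((1 : ℂ) + (x : ℂ) ^ 2) ^ (-(1 / 2 + Complex.I * r)) *
        ((|x| : ℝ) : ℂ) ^ (-(1 / 2 - Complex.I * r)) =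
      Complex.Gamma (1 / 4 + Complex.I * r / 2) ^ 2 / Complex.Gamma (1 / 2 + Complex.I * r) := by
  set s : ℂ := 1 / 2 + Complex.I * r with hs
  have hs2re : 0 < (s / 2).re := by rw [hs]; simp
  set F : ℝ → ℂ := fun x => ((1 : ℂ) + (x : ℂ) ^ 2) ^ (-s) * ((|x| : ℝ) : ℂ) ^ (s - 1) with hF
  have hFeq : (fun x : ℝ =>
      ((1 : ℂ) + (x : ℂ) ^ 2) ^ (-(1 / 2 + Complex.I * r)) *
        ((|x| : ℝ) : ℂ) ^ (-(1 / 2 - Complex.I * r))) = F := by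
    funext x
    rw [hF, show -(1/2 - Complex.I * (r:ℂ)) = s - 1 by rw [hs]; ring]
  set bfun : ℝ → ℂ := fun u => (u : ℂ) ^ (s / 2 - 1) * (1 - (u : ℂ)) ^ (s / 2 - 1) with hb
  -- sqrt substitution data
  have hsqrt_img : Real.sqrt '' Ioi 0 = Ioi (0 : ℝ) := by
    ext y
    simp only [mem_image, mem_Ioi]
    constructor
    · rintro ⟨t, ht, rfl⟩; exact Real.sqrt_pos.mpr ht
    · intro hy; exact ⟨y ^ 2, by positivity, Real.sqrt_sq hy.le⟩
  have hsqrt_inj : InjOn Real.sqrt (Ioi 0) := by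
    intro a ha b hb h
    have := congrArg (· ^ 2) h
    simpa [Real.sq_sqrt (le_of_lt ha), Real.sq_sqrt (le_of_lt hb)] using this
  have hsqrt_deriv : ∀ t ∈ Ioi (0:ℝ),
      HasDerivWithinAt Real.sqrt (1 / (2 * Real.sqrt t)) (Ioi 0) t :=
    fun t ht => (Real.hasDerivAt_sqrt (ne_of_gt ht)).hasDerivWithinAt
  -- Möbius substitution data
  set m : ℝ → ℝ := fun u => u / (1 - u) with hm
  have hm_img : m '' Ioo 0 1 = Ioi (0 : ℝ) := by
    ext t
    simp only [mem_image, mem_Ioo, mem_Ioi]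
    constructor
    · rintro ⟨u, ⟨h0, h1⟩, rfl⟩
      exact div_pos h0 (by linarith)
    · intro ht
      have h1t : (0:ℝ) < 1 + t := by linarith
      refine ⟨t / (1 + t), ⟨by positivity, by rw [div_lt_one h1t]; linarith⟩, ?_⟩
      have h2 : 1 - t / (1 + t) = 1 / (1 + t) := by field_simp; ring
      simp only [hm]
      rw [h2]; field_simp
  have hm_inj : InjOn m (Ioo 0 1) := by
    rintro a ⟨ha0, ha1⟩ b ⟨hb0, hb1⟩ h
    simp only [hm] at h
    rw [div_eq_div_iff (by linarith) (by linarith)] at h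
    nlinarith
  have hm_deriv : ∀ u ∈ Ioo (0:ℝ) 1,
      HasDerivWithinAt m (((1 - u) ^ 2)⁻¹) (Ioo 0 1) u := by
    intro u hu
    have h1u : 1 - u ≠ 0 := by
      rintro h; rw [sub_eq_zero] at h; exact absurd h.symm (ne_of_lt hu.2)
    have h := (hasDerivAt_id u).div ((hasDerivAt_id u).const_sub 1) h1u
    refine h.hasDerivWithinAt.congr_deriv ?_
    simp only [id]; ring
  set G : ℝ → ℂ := fun t => |1 / (2 * Real.sqrt t)| • F (Real.sqrt t) with hG
  -- the key pointwise identity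
  have hpt : ∀ u ∈ Ioo (0:ℝ) 1,
      |((1 - u) ^ 2)⁻¹| • G (m u) = (1/2 : ℂ) * bfun u := by
    intro u hu
    obtain ⟨h0, h1⟩ := hu
    have h1u : 0 < 1 - u := by linarith
    simp only [hG, hm, hb]
    set t : ℝ := u / (1 - u) with htdef
    have ht : 0 < t := div_pos h0 h1u
    have hst : 0 < Real.sqrt t := Real.sqrt_pos.mpr ht
    set lu := Real.log u with hlu
    set lv := Real.log (1 - u) with hlv
    have hlogt : Real.log t = lu - lv := Real.log_div h0.ne' h1u.ne'
    have h1pt : 1 + t = (1 - u)⁻¹ := by rw [htdef]; field_simp; ring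
    have hlog1pt : Real.log (1 + t) = -lv := by rw [h1pt, Real.log_inv]
    have hA : ((1 : ℂ) + ((Real.sqrt t : ℝ) : ℂ) ^ 2) ^ (-s) = Complex.exp (s * lv) := by
      rw [← Complex.ofReal_pow, Real.sq_sqrt ht.le]
      rw [show (1 : ℂ) + (t : ℝ) = ((1 + t : ℝ) : ℂ) by push_cast; ring]
      rw [cpow_pos_exp (by linarith), hlog1pt]
      push_cast; ring_nf
    have hB : ((|Real.sqrt t| : ℝ) : ℂ) ^ (s - 1) = Complex.exp ((s - 1) * ((lu - lv) / 2)) := by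
      rw [abs_of_pos hst, cpow_pos_exp hst, Real.log_sqrt ht.le, hlogt]
      push_cast; ring_nf
    have hS1 : (|((1 - u) ^ 2)⁻¹| : ℝ) = Real.exp (-(2 * lv)) := by
      rw [abs_of_pos (by positivity), ← Real.exp_log (x := ((1-u)^2)⁻¹) (by positivity),
        Real.log_inv, Real.log_pow]
      norm_num
      exact hlv.symm
    have hS2 : (|1 / (2 * Real.sqrt t)| : ℝ) = (1/2) * Real.exp (-((lu - lv)/2)) := by
      rw [abs_of_pos (by positivity), ← Real.exp_log (x := Real.sqrt t) hst,
        Real.log_sqrt ht.le, hlogt]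
      rw [one_div, mul_inv, Real.exp_neg]
      ring
    simp only [hF]
    rw [hA, hB, hS1, hS2]
    have hcu : (u : ℂ) ^ (s/2 - 1) = Complex.exp ((s/2 - 1) * lu) := cpow_pos_exp h0 _
    have hcv : (1 - (u : ℂ)) ^ (s/2 - 1) = Complex.exp ((s/2 - 1) * lv) := by
      rw [show (1 - (u:ℂ)) = ((1 - u : ℝ) : ℂ) by push_cast; ring, cpow_pos_exp h1u]
    rw [hcu, hcv]
    simp only [real_smul, Complex.ofReal_exp, Complex.ofReal_mul, Complex.ofReal_div,
      Complex.ofReal_one, Complex.ofReal_ofNat, Complex.ofReal_neg, Complex.ofReal_sub]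
    rw [← Complex.exp_add]
    ring_nf
    rw [← Complex.exp_add, ← Complex.exp_add, ← Complex.exp_add]
    congr 2
    ring
  -- beta integral facts
  have hbe : IntegrableOn bfun (Ioo 0 1) := by
    have h := Complex.betaIntegral_convergent hs2re hs2re
    rw [intervalIntegrable_iff_integrableOn_Ioc_of_le zero_le_one] at h
    exact (integrableOn_Ioc_iff_integrableOn_Ioo).mp h
  have hbv : ∫ u in Ioo (0:ℝ) 1, bfun u = Complex.betaIntegral (s/2) (s/2) := by
    rw [Complex.betaIntegral, intervalIntegral.integral_of_le zero_le_one,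
      integral_Ioc_eq_integral_Ioo]
  -- substitution equivalences
  have key1 := integrableOn_image_iff_integrableOn_abs_deriv_smul measurableSet_Ioi
    hsqrt_deriv hsqrt_inj F
  rw [hsqrt_img] at key1
  have key2 := integrableOn_image_iff_integrableOn_abs_deriv_smul measurableSet_Ioo
    hm_deriv hm_inj G
  rw [hm_img] at key2
  have hint3 : IntegrableOn (fun u => |((1 - u) ^ 2)⁻¹| • G (m u)) (Ioo 0 1) := by
    have h12 : IntegrableOn (fun u => (1/2 : ℂ) * bfun u) (Ioo 0 1) := hbe.const_mul _
    exact h12.congr_fun (fun u hu => (hpt u hu).symm) measurableSet_Ioo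
  have hIoi : IntegrableOn F (Ioi 0) := key1.mpr (key2.mpr hint3)
  -- value over Ioi 0
  have hval1 := integral_image_eq_integral_abs_deriv_smul measurableSet_Ioi
    hsqrt_deriv hsqrt_inj F
  rw [hsqrt_img] at hval1
  have hval2 := integral_image_eq_integral_abs_deriv_smul measurableSet_Ioo
    hm_deriv hm_inj G
  rw [hm_img] at hval2
  have hvIoi : ∫ x in Ioi (0:ℝ), F x
      = (1/2 : ℂ) * Complex.betaIntegral (s/2) (s/2) := by
    rw [hval1, show (∫ x in Ioi (0:ℝ), |1 / (2 * Real.sqrt x)| • F (Real.sqrt x))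
        = ∫ x in Ioi (0:ℝ), G x from rfl, hval2,
      setIntegral_congr_fun measurableSet_Ioo hpt, integral_const_mul, hbv]
  -- evenness
  have hFeven : ∀ x : ℝ, F (-x) = F x := by
    intro x
    simp only [hF, abs_neg, Complex.ofReal_neg, neg_sq]
  have hIic : IntegrableOn F (Iic 0) := by
    have A : MeasurableEmbedding fun x : ℝ => -x :=
      (Homeomorph.neg ℝ).measurableEmbedding
    rw [IntegrableOn, ← Measure.map_neg_eq_self (volume : Measure ℝ)]
    rw [← IntegrableOn, A.integrableOn_map_iff]
    simp_rw [Function.comp_def, hFeven, neg_preimage, neg_Iic, neg_zero]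
    exact (integrableOn_Ici_iff_integrableOn_Ioi).mpr hIoi
  have hint : Integrable F := by
    rw [← integrableOn_univ, ← Set.Iic_union_Ioi (a := (0:ℝ))]
    exact hIic.union hIoi
  have hvIic : ∫ x in Iic (0:ℝ), F x = ∫ x in Ioi (0:ℝ), F x := by
    have h := integral_comp_neg_Ioi (0:ℝ) F
    rw [neg_zero] at h
    rw [← h]
    exact setIntegral_congr_fun measurableSet_Ioi fun x _ => hFeven x
  have hsplit : ∫ x : ℝ, F x = (∫ x in Iic (0:ℝ), F x) + ∫ x in Ioi (0:ℝ), F x := by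
    rw [← setIntegral_union (Iic_disjoint_Ioi le_rfl) measurableSet_Ioi hIic hIoi,
      Set.Iic_union_Ioi, setIntegral_univ]
  -- Gamma identities
  have hGamma := Complex.Gamma_mul_Gamma_eq_betaIntegral hs2re hs2re
  rw [show s/2 + s/2 = s by ring] at hGamma
  have hGne : Complex.Gamma s ≠ 0 := Complex.Gamma_ne_zero_of_re_pos (by rw [hs]; simp)
  have hBval : Complex.betaIntegral (s/2) (s/2)
      = Complex.Gamma (s/2) ^ 2 / Complex.Gamma s := by
    rw [eq_div_iff hGne]; linear_combination -hGamma
  rw [hFeq]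
  refine ⟨hint, ?_⟩
  rw [hsplit, hvIic, hvIoi, hBval, show (1/4 : ℂ) + Complex.I * r / 2 = s / 2 by rw [hs]; ring]
  rw [hs]
  ring
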